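/- If 2 ≤ q ≤ 3 then for all real t ≥ -1, (1+t)^q ≤ 1 + q·t + (1/2)·q·(q-1)·t² + (max(t,0))^q. -/

import Mathlib

open Real Set

/-- Subadditivity of `x ^ p` for `0 ≤ p ≤ 1` on nonnegative reals. -/
lemma real_rpow_add_le_add_rpow {x y p : ℝ} (hx : 0 ≤ x) (hy : 0 ≤ y)
    (hp : 0 ≤ p) (hp1 : p ≤ 1) : (x + y) ^ p ≤ x ^ p + y ^ p := by
  have h := NNReal.rpow_add_le_add_rpow x.toNNReal y.toNNReal hp hp1
  have := NNReal.coe_le_coe.2 h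
  simpa [NNReal.coe_rpow, Real.coe_toNNReal _ hx, Real.coe_toNNReal _ hy,
    Real.coe_toNNReal _ (add_nonneg hx hy), ← Real.toNNReal_add hx hy] using this

/-- First layer: for `s ≥ 0`, `(1+s)^(q-1) ≤ 1 + (q-1)*s + s^(q-1)`. -/
lemma layer1 (q : ℝ) (hq2 : 2 ≤ q) (hq3 : q ≤ 3) {s : ℝ} (hs : 0 ≤ s) :
    (1 + s) ^ (q - 1) ≤ 1 + (q - 1) * s + s ^ (q - 1) := by
  set f : ℝ → ℝ := fun x => 1 + (q - 1) * x + x ^ (q - 1) - (1 + x) ^ (q - 1) with hf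
  have hq1 : (1 : ℝ) ≤ q - 1 := by linarith
  have hder : ∀ x ∈ interior (Ici (0 : ℝ)), HasDerivAt f
      ((q - 1) + (q - 1) * x ^ (q - 2) - (q - 1) * (1 + x) ^ (q - 2)) x := by
    intro x hx
    rw [interior_Ici] at hx
    have hx0 : (0 : ℝ) < x := hx
    have d1 : HasDerivAt (fun x : ℝ => x ^ (q - 1)) ((q - 1) * x ^ (q - 1 - 1)) x :=
      Real.hasDerivAt_rpow_const (Or.inl hx0.ne')
    have d2 : HasDerivAt (fun x : ℝ => (1 + x) ^ (q - 1))
        ((q - 1) * (1 + x) ^ (q - 1 - 1)) x := by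
      simpa using (HasDerivAt.const_add 1 (hasDerivAt_id x)).rpow_const
        (Or.inl (by positivity : (1:ℝ) + x ≠ 0))
    have d3 : HasDerivAt (fun x : ℝ => 1 + (q - 1) * x) (q - 1) x := by
      simpa using (HasDerivAt.const_add 1 ((hasDerivAt_id x).const_mul (q - 1)))
    have := (d3.add d1).sub d2
    refine this.congr_deriv ?_
    ring_nf
  have hmono : MonotoneOn f (Ici 0) := by
    apply monotoneOn_of_deriv_nonneg (convex_Ici 0)
    · apply ContinuousOn.sub (ContinuousOn.add (by fun_prop)
        (fun x hx => (Real.continuousAt_rpow_const x (q-1)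
          (Or.inr (by linarith))).continuousWithinAt))
      intro x hx
      exact ((Real.continuousAt_rpow_const (1+x) (q-1) (Or.inr (by linarith))).comp
        (by fun_prop)).continuousWithinAt
    · intro x hx
      exact (hder x hx).differentiableAt.differentiableWithinAt
    · intro x hx
      rw [(hder x hx).deriv]
      rw [interior_Ici] at hx
      have hx0 : (0 : ℝ) < x := hx
      have hsub : (1 + x) ^ (q - 2) ≤ 1 + x ^ (q - 2) := by
        have h2 : ((1:ℝ) + x) ^ (q - 2) ≤ (1:ℝ) ^ (q - 2) + x ^ (q - 2) :=
          real_rpow_add_le_add_rpow zero_le_one hx0.le (by linarith) (by linarith)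
        simpa using h2
      nlinarith [Real.rpow_nonneg hx0.le (q - 2)]
  have h0 : f 0 = 0 := by
    simp [hf, Real.zero_rpow (by linarith : q - 1 ≠ 0)]
  have := hmono (self_mem_Ici) (mem_Ici.2 hs) hs
  rw [h0] at this
  have : 0 ≤ f s := this
  simp only [hf] at this
  linarith

/-- Case `t ≥ 0`. -/
lemma case_nonneg (q : ℝ) (hq2 : 2 ≤ q) (hq3 : q ≤ 3) {t : ℝ} (ht : 0 ≤ t) :
    (1 + t) ^ q ≤ 1 + q * t + (1 / 2) * q * (q - 1) * t ^ 2 + t ^ q := by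
  set f : ℝ → ℝ := fun x => 1 + q * x + (1 / 2) * q * (q - 1) * x ^ 2 + x ^ q - (1 + x) ^ q
    with hf
  have hq0 : (0 : ℝ) < q := by linarith
  have hder : ∀ x ∈ interior (Ici (0 : ℝ)), HasDerivAt f
      (q + q * (q - 1) * x + q * x ^ (q - 1) - q * (1 + x) ^ (q - 1)) x := by
    intro x hx
    rw [interior_Ici] at hx
    have hx0 : (0 : ℝ) < x := hx
    have d1 : HasDerivAt (fun x : ℝ => x ^ q) (q * x ^ (q - 1)) x :=
      Real.hasDerivAt_rpow_const (Or.inl hx0.ne')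
    have d2 : HasDerivAt (fun x : ℝ => (1 + x) ^ q) (q * (1 + x) ^ (q - 1)) x := by
      simpa using (HasDerivAt.const_add 1 (hasDerivAt_id x)).rpow_const
        (Or.inl (by positivity : (1:ℝ) + x ≠ 0))
    have d3 : HasDerivAt (fun x : ℝ => 1 + q * x + (1 / 2) * q * (q - 1) * x ^ 2)
        (q + (1 / 2) * q * (q - 1) * (2 * x)) x := by
      have : HasDerivAt (fun x : ℝ => x ^ 2) (2 * x) x := by
        simpa using hasDerivAt_pow 2 x
      simpa [Pi.add_def] using ((HasDerivAt.const_add 1 ((hasDerivAt_id x).const_mul q)).add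
        (this.const_mul ((1 / 2) * q * (q - 1))))
    have := (d3.add d1).sub d2
    refine this.congr_deriv ?_
    ring
  have hmono : MonotoneOn f (Ici 0) := by
    apply monotoneOn_of_deriv_nonneg (convex_Ici 0)
    · apply ContinuousOn.sub (ContinuousOn.add (by fun_prop)
        (fun x hx => (Real.continuousAt_rpow_const x q
          (Or.inr hq0.le)).continuousWithinAt))
      intro x hx
      exact ((Real.continuousAt_rpow_const (1+x) q (Or.inr hq0.le)).comp
        (by fun_prop)).continuousWithinAt
    · intro x hx
      exact (hder x hx).differentiableAt.differentiableWithinAt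
    · intro x hx
      rw [(hder x hx).deriv]
      rw [interior_Ici] at hx
      have hx0 : (0 : ℝ) < x := hx
      have h1 := layer1 q hq2 hq3 hx0.le
      nlinarith
  have h0 : f 0 = 0 := by
    simp [hf, Real.zero_rpow hq0.ne']
  have := hmono self_mem_Ici (mem_Ici.2 ht) ht
  rw [h0] at this
  simp only [hf] at this
  linarith

/-- Case `-1 ≤ t ≤ 0`. -/
lemma case_nonpos (q : ℝ) (hq2 : 2 ≤ q) (hq3 : q ≤ 3) {t : ℝ} (ht : -1 ≤ t) (ht0 : t ≤ 0) :
    (1 + t) ^ q ≤ 1 + q * t + (1 / 2) * q * (q - 1) * t ^ 2 := by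
  set f : ℝ → ℝ := fun x => 1 + q * x + (1 / 2) * q * (q - 1) * x ^ 2 - (1 + x) ^ q with hf
  have hq1 : (1 : ℝ) ≤ q := by linarith
  have hder : ∀ x ∈ interior (Icc (-1 : ℝ) 0), HasDerivAt f
      (q + q * (q - 1) * x - q * (1 + x) ^ (q - 1)) x := by
    intro x hx
    rw [interior_Icc] at hx
    have d2 : HasDerivAt (fun x : ℝ => (1 + x) ^ q) (q * (1 + x) ^ (q - 1)) x := by
      simpa using (HasDerivAt.const_add 1 (hasDerivAt_id x)).rpow_const (Or.inr hq1)
    have d3 : HasDerivAt (fun x : ℝ => 1 + q * x + (1 / 2) * q * (q - 1) * x ^ 2)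
        (q + (1 / 2) * q * (q - 1) * (2 * x)) x := by
      have : HasDerivAt (fun x : ℝ => x ^ 2) (2 * x) x := by
        simpa using hasDerivAt_pow 2 x
      simpa [Pi.add_def] using ((HasDerivAt.const_add 1 ((hasDerivAt_id x).const_mul q)).add
        (this.const_mul ((1 / 2) * q * (q - 1))))
    have := d3.sub d2
    refine this.congr_deriv ?_
    ring
  have hanti : AntitoneOn f (Icc (-1) 0) := by
    apply antitoneOn_of_deriv_nonpos (convex_Icc (-1) 0)
    · apply ContinuousOn.sub (by fun_prop)
      intro x hx
      exact ((Real.continuousAt_rpow_const (1+x) q (Or.inr (by linarith))).comp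
        (by fun_prop)).continuousWithinAt
    · intro x hx
      exact (hder x hx).differentiableAt.differentiableWithinAt
    · intro x hx
      rw [(hder x hx).deriv]
      rw [interior_Icc] at hx
      have hb : 1 + (q - 1) * x ≤ (1 + x) ^ (q - 1) :=
        one_add_mul_self_le_rpow_one_add (by linarith [hx.1]) (by linarith)
      nlinarith
  have h0 : f 0 = 0 := by simp [hf]
  have := hanti (mem_Icc.2 ⟨ht, ht0⟩) (mem_Icc.2 ⟨by norm_num, le_refl 0⟩) ht0
  rw [h0] at this
  simp only [hf] at this
  linarith

theorem rpow_le_taylor_q_two_three (q t : ℝ) (hq2 : 2 ≤ q) (hq3 : q ≤ 3)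
    (ht : -1 ≤ t) :
    (1 + t) ^ q ≤ 1 + q * t + (1 / 2) * q * (q - 1) * t ^ 2 + (max t 0) ^ q := by
  rcases le_or_gt t 0 with h | h
  · rw [max_eq_right h, Real.zero_rpow (by linarith : q ≠ 0)]
    simpa using case_nonpos q hq2 hq3 ht h
  · rw [max_eq_left h.le]
    exact case_nonneg q hq2 hq3 h.le
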